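/- Every homogeneous polynomial P of degree n in MvPolynomial (Fin 3) ℝ admits a unique decomposition P = ∑_{j : 0 ≤ 2j ≤ n} q^j * h j, where each h j ∈ MvPolynomial (Fin 3) ℝ is homogeneous of degree n − 2j and harmonic (Δ(h j) = 0). Uniqueness means: if (h j) and (h' j) are two such families, then h j = h' j for all j with 2j ≤ n. -/

import Mathlib

open MvPolynomial

noncomputable def qp : MvPolynomial (Fin 3) ℝ := X 0 ^ 2 + X 1 ^ 2 + X 2 ^ 2

noncomputable def lap : MvPolynomial (Fin 3) ℝ →ₗ[ℝ] MvPolynomial (Fin 3) ℝ :=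
  ∑ i : Fin 3, ((pderiv i).toLinearMap.comp (pderiv i).toLinearMap)

lemma lap_apply (p : MvPolynomial (Fin 3) ℝ) :
    lap p = ∑ i : Fin 3, pderiv i (pderiv i p) := by
  simp [lap]

lemma deg3 (d : Fin 3 →₀ ℕ) : d.degree = ∑ i : Fin 3, d i := by
  rw [Finsupp.degree]
  exact Finset.sum_subset (Finset.subset_univ _) (by intro i _ h; simpa using h)

lemma single_add_sub {d : Fin 3 →₀ ℕ} {i : Fin 3} (h : d i ≠ 0) :
    Finsupp.single i 1 + (d - Finsupp.single i 1) = d := by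
  ext j
  rcases eq_or_ne j i with rfl | hj
  · simp [Finsupp.single_apply]; omega
  · simp [Finsupp.single_apply, hj.symm, Ne.symm hj]

lemma pderiv_isHom (i : Fin 3) {k : ℕ} {f : MvPolynomial (Fin 3) ℝ}
    (hf : f.IsHomogeneous (k+1)) : (pderiv i f).IsHomogeneous k := by
  rw [← mem_homogeneousSubmodule, f.as_sum, map_sum]
  refine Submodule.sum_mem _ fun d hd => ?_
  rw [pderiv_monomial]
  by_cases h : d i = 0
  · simp [h]
  · rw [mem_homogeneousSubmodule]
    apply isHomogeneous_monomial
    have hdeg : d.degree = k + 1 := by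
      have := hf (mem_support_iff.mp hd)
      rw [Finsupp.degree_eq_weight_one]; exact this
    have := single_add_sub h
    have h2 : (Finsupp.single i 1 + (d - Finsupp.single i 1)).degree = k + 1 := by rw [this, hdeg]
    rw [deg3] at h2 ⊢
    simp only [Finsupp.add_apply, Finset.sum_add_distrib] at h2
    have h3 : ∑ j : Fin 3, Finsupp.single i 1 j = 1 := by
      simp [Finsupp.single_apply]
    omega

lemma pderiv_of_deg0 {f : MvPolynomial (Fin 3) ℝ} (hf : f.IsHomogeneous 0) (i : Fin 3) :
    pderiv i f = 0 := by
  conv_lhs => rw [f.as_sum]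
  rw [map_sum]
  refine Finset.sum_eq_zero fun d hd => ?_
  have hd0 : d = 0 := by
    have := hf (mem_support_iff.mp hd)
    replace this : d.degree = 0 := by rw [Finsupp.degree_eq_weight_one]; exact this
    exact (Finsupp.degree_eq_zero_iff d).mp this
  subst hd0
  rw [pderiv_monomial]
  simp

lemma lap_of_deg0 {f : MvPolynomial (Fin 3) ℝ} (hf : f.IsHomogeneous 0) : lap f = 0 := by
  rw [lap_apply]
  simp [pderiv_of_deg0 hf]

lemma lap_of_deg1 {f : MvPolynomial (Fin 3) ℝ} (hf : f.IsHomogeneous 1) : lap f = 0 := by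
  rw [lap_apply]
  refine Finset.sum_eq_zero fun i _ => ?_
  rw [pderiv_of_deg0 (pderiv_isHom i hf) i]

lemma lap_isHom {k : ℕ} {f : MvPolynomial (Fin 3) ℝ} (hf : f.IsHomogeneous (k+2)) :
    (lap f).IsHomogeneous k := by
  rw [lap_apply, ← mem_homogeneousSubmodule]
  exact Submodule.sum_mem _ fun i _ => pderiv_isHom i (pderiv_isHom i hf)







lemma euler {k : ℕ} {f : MvPolynomial (Fin 3) ℝ} (hf : f.IsHomogeneous k) :
    ∑ i : Fin 3, X i * pderiv i f = (k : ℝ) • f := by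
  conv_lhs => rw [f.as_sum]
  simp only [map_sum, Finset.mul_sum]
  rw [Finset.sum_comm]
  conv_rhs => rw [f.as_sum]
  rw [Finset.smul_sum]
  refine Finset.sum_congr rfl fun d hd => ?_
  have hdeg : d.degree = k := by
    have := hf (mem_support_iff.mp hd)
    rw [Finsupp.degree_eq_weight_one]; exact this
  have step : ∀ i : Fin 3, X i * pderiv i (monomial d (coeff d f))
      = (d i : ℝ) • monomial d (coeff d f) := by
    intro i
    rw [pderiv_monomial]
    by_cases h : d i = 0
    · simp [h]
    · rw [X, monomial_mul, single_add_sub h, smul_monomial, smul_eq_mul, one_mul, mul_comm]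
  calc ∑ i : Fin 3, X i * pderiv i (monomial d (coeff d f))
      = ∑ i : Fin 3, (d i : ℝ) • monomial d (coeff d f) := by
        exact Finset.sum_congr rfl fun i _ => step i
    _ = ((∑ i : Fin 3, d i : ℕ) : ℝ) • monomial d (coeff d f) := by
        rw [← Finset.sum_smul]; norm_cast
    _ = (k : ℝ) • monomial d (coeff d f) := by rw [← deg3, hdeg]

lemma qp_isHom : qp.IsHomogeneous 2 := by
  rw [← mem_homogeneousSubmodule]
  refine Submodule.add_mem _ (Submodule.add_mem _ ?_ ?_) ?_ <;>
    simpa using isHomogeneous_X_pow (R := ℝ) _ 2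

lemma pderiv_qp (i : Fin 3) : pderiv i qp = 2 * X i := by
  rw [qp]
  fin_cases i <;> simp [pderiv_pow, pderiv_X]

lemma lap_leibniz (a b : MvPolynomial (Fin 3) ℝ) :
    lap (a * b) = lap a * b + 2 * ∑ i : Fin 3, pderiv i a * pderiv i b + a * lap b := by
  have expand : ∀ i : Fin 3, pderiv i (pderiv i (a * b))
      = pderiv i (pderiv i a) * b + 2 * (pderiv i a * pderiv i b)
        + a * pderiv i (pderiv i b) := by
    intro i
    rw [pderiv_mul, map_add, pderiv_mul, pderiv_mul]
    ring
  rw [lap_apply, lap_apply, lap_apply]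
  simp only [expand, Finset.sum_add_distrib]
  rw [Finset.sum_mul, Finset.mul_sum, Finset.mul_sum]

lemma lap_qp_mul {k : ℕ} {f : MvPolynomial (Fin 3) ℝ} (hf : f.IsHomogeneous k) :
    lap (qp * f) = ((4 * k + 6 : ℕ) : ℝ) • f + qp * lap f := by
  rw [lap_leibniz]
  have h1 : ∑ i : Fin 3, pderiv i qp * pderiv i f = 2 * (C (k : ℝ) * f) := by
    calc ∑ i : Fin 3, pderiv i qp * pderiv i f
        = 2 * ∑ i : Fin 3, X i * pderiv i f := by
          rw [Finset.mul_sum]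
          exact Finset.sum_congr rfl fun i _ => by rw [pderiv_qp]; ring
      _ = 2 * (C (k : ℝ) * f) := by rw [euler hf, smul_eq_C_mul]
  have h2 : lap qp = 6 := by
    rw [lap_apply]
    have h2i : ∀ i : Fin 3, pderiv i (pderiv i qp) = 2 := by
      intro i
      rw [pderiv_qp, two_mul, map_add, pderiv_X_self]
      norm_num
    simp only [h2i]
    simp [Finset.sum_const]
    norm_num
  rw [h1, h2, smul_eq_C_mul]
  have h3 : (C (((4 * k + 6 : ℕ) : ℝ)) : MvPolynomial (Fin 3) ℝ)
      = 4 * C ((k : ℝ)) + 6 := by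
    push_cast
    rw [map_add, map_mul, map_ofNat, map_ofNat]
  rw [h3]
  ring

lemma lap_qp_pow_mul {k : ℕ} (j : ℕ) {f : MvPolynomial (Fin 3) ℝ} (hf : f.IsHomogeneous k) :
    lap (qp ^ (j + 1) * f)
      = ((2 * (j + 1) * (2 * k + 2 * (j + 1) + 1) : ℕ) : ℝ) • (qp ^ j * f)
        + qp ^ (j + 1) * lap f := by
  induction j with
  | zero =>
    rw [pow_one, pow_zero, one_mul, lap_qp_mul hf]
    congr 2
    push_cast
    ring
  | succ j ih =>
    have hqf : (qp ^ (j + 1) * f).IsHomogeneous (2 * (j + 1) + k) :=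
      (qp_isHom.pow (j + 1)).mul hf
    have hsplit : qp ^ (j + 1 + 1) * f = qp * (qp ^ (j + 1) * f) := by ring
    rw [hsplit, lap_qp_mul hqf, ih]
    set A : ℝ := ((4 * (2 * (j + 1) + k) + 6 : ℕ) : ℝ) with hA
    set B : ℝ := ((2 * (j + 1) * (2 * k + 2 * (j + 1) + 1) : ℕ) : ℝ) with hB
    set D : ℝ := ((2 * (j + 1 + 1) * (2 * k + 2 * (j + 1 + 1) + 1) : ℕ) : ℝ) with hD
    rw [mul_add, mul_smul_comm, ← mul_assoc, ← mul_assoc, ← pow_succ', ← pow_succ',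
      ← add_assoc, ← add_smul]
    congr 1
    rw [hA, hB, hD]
    push_cast
    ring_nf

lemma smul_zero_cancel {c : ℝ} (hc : c ≠ 0) {p : MvPolynomial (Fin 3) ℝ}
    (h : c • p = 0) : p = 0 := by
  have h2 := congrArg (fun x => c⁻¹ • x) h
  simpa [smul_smul, inv_mul_cancel₀ hc] using h2

lemma UN : ∀ n : ℕ, ∀ h : ℕ → MvPolynomial (Fin 3) ℝ,
    (∀ j, 2 * j ≤ n → (h j).IsHomogeneous (n - 2 * j) ∧ lap (h j) = 0) →
    ∑ j ∈ Finset.range (n / 2 + 1), qp ^ j * h j = 0 →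
    ∀ j ≤ n / 2, h j = 0 := by
  intro n
  induction n using Nat.strong_induction_on with
  | _ n ih =>
    intro h hprop hsum
    by_cases hn : n < 2
    · intro j hj
      interval_cases n <;>
        · simp only [Nat.reduceDiv, Nat.zero_div, Nat.le_zero] at hj
          subst hj
          simpa using hsum
    · push_neg at hn
      have hm : (n - 2) / 2 + 1 = n / 2 := by omega
      -- apply lap to hsum
      have hlap : ∑ j ∈ Finset.range ((n - 2) / 2 + 1),
          qp ^ j * (((2 * (j + 1) * (2 * (n - 2 * (j + 1)) + 2 * (j + 1) + 1) : ℕ) : ℝ)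
            • h (j + 1)) = 0 := by
        have h0 := congrArg (fun p => lap p) hsum
        simp only [map_sum, map_zero] at h0
        rw [Finset.sum_range_succ'] at h0
        have hterm : ∀ j < n / 2, lap (qp ^ (j + 1) * h (j + 1))
            = qp ^ j * (((2 * (j + 1) * (2 * (n - 2 * (j + 1)) + 2 * (j + 1) + 1) : ℕ) : ℝ)
              • h (j + 1)) := by
          intro j hj
          have h2j : 2 * (j + 1) ≤ n := by omega
          obtain ⟨hhom, hharm⟩ := hprop (j + 1) h2j
          rw [lap_qp_pow_mul j hhom, hharm, mul_zero, add_zero, mul_smul_comm]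
        rw [Finset.sum_congr rfl (fun j hj => hterm j (Finset.mem_range.mp hj))] at h0
        have hlast : lap (qp ^ 0 * h 0) = 0 := by
          rw [pow_zero, one_mul, (hprop 0 (by omega)).2]
        rw [hlast, add_zero] at h0
        rw [hm]
        exact h0
      have hg : ∀ j, 2 * j ≤ n - 2 →
          ((((2 * (j + 1) * (2 * (n - 2 * (j + 1)) + 2 * (j + 1) + 1) : ℕ) : ℝ)
            • h (j + 1)).IsHomogeneous ((n - 2) - 2 * j) ∧
          lap (((2 * (j + 1) * (2 * (n - 2 * (j + 1)) + 2 * (j + 1) + 1) : ℕ) : ℝ)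
            • h (j + 1)) = 0) := by
        intro j hj
        have h2j : 2 * (j + 1) ≤ n := by omega
        obtain ⟨hhom, hharm⟩ := hprop (j + 1) h2j
        constructor
        · have : n - 2 * (j + 1) = (n - 2) - 2 * j := by omega
          rw [← this]
          rw [← mem_homogeneousSubmodule] at hhom ⊢
          exact Submodule.smul_mem _ _ hhom
        · rw [map_smul, hharm, smul_zero]
      have hz := ih (n - 2) (by omega) _ hg hlap
      intro j hj
      rcases Nat.eq_zero_or_pos j with rfl | hjpos
      · -- h 0 = 0 from the original sum
        have : ∀ j ∈ Finset.range (n / 2 + 1), j ≠ 0 → qp ^ j * h j = 0 := by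
          intro j hjr hj0
          have hj' : j - 1 ≤ (n - 2) / 2 := by
            have := Finset.mem_range.mp hjr
            omega
          have := hz (j - 1) hj'
          have hcj : ((2 * ((j-1) + 1) * (2 * (n - 2 * ((j-1) + 1)) + 2 * ((j-1) + 1) + 1) : ℕ) : ℝ) ≠ 0 := by
            rw [Nat.cast_ne_zero]
            positivity
          have hh := smul_zero_cancel hcj this
          have hj1 : j - 1 + 1 = j := by omega
          rw [hj1] at hh
          rw [hh, mul_zero]
        rw [Finset.sum_eq_single 0 this (by simp)] at hsum
        simpa using hsum
      · have hj' : j - 1 ≤ (n - 2) / 2 := by omega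
        have := hz (j - 1) hj'
        have hcj : ((2 * ((j-1) + 1) * (2 * (n - 2 * ((j-1) + 1)) + 2 * ((j-1) + 1) + 1) : ℕ) : ℝ) ≠ 0 := by
          rw [Nat.cast_ne_zero]
          positivity
        have hh := smul_zero_cancel hcj this
        have hj1 : j - 1 + 1 = j := by omega
        rwa [hj1] at hh

lemma EX : ∀ n : ℕ, ∀ P : MvPolynomial (Fin 3) ℝ, P.IsHomogeneous n →
    ∃ h : ℕ → MvPolynomial (Fin 3) ℝ,
      (∀ j, 2 * j ≤ n → (h j).IsHomogeneous (n - 2 * j) ∧ lap (h j) = 0) ∧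
      P = ∑ j ∈ Finset.range (n / 2 + 1), qp ^ j * h j := by
  intro n
  induction n using Nat.strong_induction_on with
  | _ n ih =>
    intro P hP
    by_cases hn : n < 2
    · refine ⟨fun j => if j = 0 then P else 0, ?_, ?_⟩
      · intro j hj
        rcases Nat.eq_zero_or_pos j with rfl | hjpos
        · simp only [if_pos rfl]
          refine ⟨by simpa using hP, ?_⟩
          interval_cases n
          · exact lap_of_deg0 hP
          · exact lap_of_deg1 hP
        · have : j ≠ 0 := by omega
          simp only [if_neg this]
          exact ⟨isHomogeneous_zero _ _ _, map_zero _⟩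
      · have : n / 2 = 0 := by omega
        rw [this]
        simp
    · push_neg at hn
      have hlapP : (lap P).IsHomogeneous (n - 2) := by
        have : n = (n - 2) + 2 := by omega
        exact lap_isHom (this ▸ hP)
      obtain ⟨g, hg, hgsum⟩ := ih (n - 2) (by omega) (lap P) hlapP
      set m' := (n - 2) / 2 with hm'
      have hm : n / 2 = m' + 1 := by omega
      -- scalar for each i
      set c : ℕ → ℕ := fun i => 2 * (i + 1) * (2 * ((n - 2) - 2 * i) + 2 * (i + 1) + 1)
        with hc
      have hcne : ∀ i, ((c i : ℕ) : ℝ) ≠ 0 := by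
        intro i
        rw [Nat.cast_ne_zero, hc]
        positivity
      have hgdeg : ∀ i ≤ m', (g i).IsHomogeneous (n - 2 * (i + 1)) := by
        intro i hi
        have h1 := (hg i (by omega)).1
        have : (n - 2) - 2 * i = n - 2 * (i + 1) := by omega
        rwa [this] at h1
      have hlapq : ∀ i ≤ m', lap (qp ^ (i + 1) * g i) = ((c i : ℕ) : ℝ) • (qp ^ i * g i) := by
        intro i hi
        rw [lap_qp_pow_mul i (hg i (by omega)).1, (hg i (by omega)).2, mul_zero, add_zero]
      set H : MvPolynomial (Fin 3) ℝ :=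
        ∑ i ∈ Finset.range (m' + 1), ((c i : ℕ) : ℝ)⁻¹ • (qp ^ (i + 1) * g i) with hH
      refine ⟨fun j => match j with
        | 0 => P - H
        | j + 1 => ((c j : ℕ) : ℝ)⁻¹ • g j, ?_, ?_⟩
      · intro j hj
        match j with
        | 0 =>
          constructor
          · rw [Nat.mul_zero, Nat.sub_zero, ← mem_homogeneousSubmodule]
            refine Submodule.sub_mem _ hP (Submodule.sum_mem _ fun i hi => ?_)
            refine Submodule.smul_mem _ _ ?_
            rw [mem_homogeneousSubmodule]
            have : 2 * (i + 1) + (n - 2 * (i + 1)) = n := by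
              have := Finset.mem_range.mp hi
              omega
            exact this ▸ (qp_isHom.pow (i + 1)).mul (hgdeg i (Finset.mem_range.mp hi |> Nat.lt_succ_iff.mp))
          · rw [map_sub, hH, map_sum]
            have : ∀ i ∈ Finset.range (m' + 1),
                lap (((c i : ℕ) : ℝ)⁻¹ • (qp ^ (i + 1) * g i)) = qp ^ i * g i := by
              intro i hi
              rw [map_smul, hlapq i (Finset.mem_range.mp hi |> Nat.lt_succ_iff.mp),
                smul_smul, inv_mul_cancel₀ (hcne i), one_smul]
            rw [Finset.sum_congr rfl this, ← hgsum, sub_eq_zero]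
        | j + 1 =>
          have hjm : j ≤ m' := by omega
          constructor
          · have := hgdeg j hjm
            rw [← mem_homogeneousSubmodule] at this ⊢
            exact Submodule.smul_mem _ _ this
          · rw [map_smul, (hg j (by omega)).2, smul_zero]
      · rw [hm, Finset.sum_range_succ']
        have : ∀ j ∈ Finset.range (m' + 1),
            qp ^ (j + 1) * (((c j : ℕ) : ℝ)⁻¹ • g j)
              = ((c j : ℕ) : ℝ)⁻¹ • (qp ^ (j + 1) * g j) := by
          intro j hj
          rw [mul_smul_comm]
        rw [Finset.sum_congr rfl this]
        simp only [pow_zero, one_mul]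
        rw [← hH]
        ring

theorem harmonic_fischer_decomposition (n : ℕ) (P : MvPolynomial (Fin 3) ℝ)
    (hP : P ∈ MvPolynomial.homogeneousSubmodule (Fin 3) ℝ n) :
    ∃! h : Fin (n / 2 + 1) → MvPolynomial (Fin 3) ℝ,
      (∀ j : Fin (n / 2 + 1),
        h j ∈ MvPolynomial.homogeneousSubmodule (Fin 3) ℝ (n - 2 * (j : ℕ)) ∧
        ∑ i : Fin 3, MvPolynomial.pderiv i (MvPolynomial.pderiv i (h j)) = 0) ∧
      P = ∑ j : Fin (n / 2 + 1),
        (MvPolynomial.X 0 ^ 2 + MvPolynomial.X 1 ^ 2 + MvPolynomial.X 2 ^ 2) ^ (j : ℕ) * h j := by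
  have hqp : (MvPolynomial.X 0 ^ 2 + MvPolynomial.X 1 ^ 2 + MvPolynomial.X 2 ^ 2
      : MvPolynomial (Fin 3) ℝ) = qp := rfl
  obtain ⟨h, hh, hsum⟩ := EX n P (mem_homogeneousSubmodule _ _ |>.mp hP)
  have hjle : ∀ j : Fin (n / 2 + 1), 2 * (j : ℕ) ≤ n := by
    intro j
    have := j.isLt
    omega
  refine ⟨fun j => h (j : ℕ), ⟨fun j => ?_, ?_⟩, ?_⟩
  · obtain ⟨h1, h2⟩ := hh (j : ℕ) (hjle j)
    exact ⟨(mem_homogeneousSubmodule _ _).mpr h1, by rw [← lap_apply]; exact h2⟩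
  · rw [hqp, hsum, ← Finset.sum_range fun i => qp ^ i * h i]
  · rintro y ⟨hy1, hy2⟩
    -- difference family
    set d : ℕ → MvPolynomial (Fin 3) ℝ :=
      fun j => if hj : j < n / 2 + 1 then y ⟨j, hj⟩ - h j else 0 with hd
    have hdprop : ∀ j, 2 * j ≤ n → (d j).IsHomogeneous (n - 2 * j) ∧ lap (d j) = 0 := by
      intro j hj2
      have hj : j < n / 2 + 1 := by omega
      obtain ⟨hym, hyh⟩ := hy1 ⟨j, hj⟩
      obtain ⟨h1, h2⟩ := hh j hj2
      rw [hd]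
      simp only [dif_pos hj]
      constructor
      · rw [← mem_homogeneousSubmodule]
        exact Submodule.sub_mem _ hym ((mem_homogeneousSubmodule _ _).mpr h1)
      · rw [map_sub, lap_apply, hyh, h2, sub_zero]
    have hdsum : ∑ j ∈ Finset.range (n / 2 + 1), qp ^ j * d j = 0 := by
      have e1 : ∑ j ∈ Finset.range (n / 2 + 1), qp ^ j * d j
          = ∑ j : Fin (n / 2 + 1), qp ^ (j : ℕ) * d (j : ℕ) :=
        (Finset.sum_range fun i => qp ^ i * d i)
      rw [e1]
      have e2 : ∀ j : Fin (n / 2 + 1), qp ^ (j : ℕ) * d (j : ℕ)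
          = qp ^ (j : ℕ) * y j - qp ^ (j : ℕ) * h (j : ℕ) := by
        intro j
        rw [hd]
        simp only [dif_pos j.isLt]
        ring
      rw [Finset.sum_congr rfl fun j _ => e2 j, Finset.sum_sub_distrib]
      rw [hqp] at hy2
      rw [← hy2, ← Finset.sum_range fun i => qp ^ i * h i, ← hsum, sub_self]
    have hz := UN n d hdprop hdsum
    funext j
    have hjz := hz (j : ℕ) (by omega)
    rw [hd] at hjz
    simp only [dif_pos j.isLt] at hjz
    have := sub_eq_zero.mp hjz
    simpa using this
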